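/- Let H be a real inner product space, f : H → ℝ, R > 0 and h₀ ≥ 0, and let (x_k)_{0 ≤ k ≤ t+1} be points of H, (g_k)_{0 ≤ k ≤ t} nonnegative reals and (L_k)_{0 ≤ k ≤ t} positive reals such that f(x_{k+1}) ≤ f(x_k) − g_k²/(2·L_k·R²) for every 0 ≤ k ≤ t, and f(x₀) − f(x_{t+1}) ≤ h₀. Then min_{0 ≤ k ≤ t} g_k ≤ R·√(2·h₀·L̄_t/(t+1)), where L̄_t := (Σ_{k=0}^{t} L_k)/(t+1) is the arithmetic mean of the Lipschitz estimates. -/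

import Mathlib

/-- Convergence rate of backtracking Matching Pursuit on non-convex objectives:
the minimal directional gap is bounded by `R·√(2h₀·L̄_t/(t+1))` where
`L̄_t` is the arithmetic mean of the accepted Lipschitz estimates. -/
theorem stmt_9 {H : Type*} [NormedAddCommGroup H] [InnerProductSpace ℝ H]
    (f : H → ℝ) (R h₀ : ℝ) (hR : 0 < R) (hh : 0 ≤ h₀) (t : ℕ)
    (x : ℕ → H) (g L : ℕ → ℝ) (hg : ∀ k ≤ t, 0 ≤ g k) (hL : ∀ k ≤ t, 0 < L k)
    (hdec : ∀ k ≤ t, f (x (k + 1)) ≤ f (x k) - g k ^ 2 / (2 * L k * R ^ 2))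
    (hsub : f (x 0) - f (x (t + 1)) ≤ h₀) :
    (Finset.range (t + 1)).inf' (by simp) g
      ≤ R * Real.sqrt (2 * h₀ * ((∑ k ∈ Finset.range (t + 1), L k) / (t + 1)) / (t + 1)) := by
  set n := t + 1 with hn
  have hnpos : (0:ℝ) < (n:ℝ) := by positivity
  set m := (Finset.range n).inf' (by simp) g with hm
  have hm0 : 0 ≤ m := by
    obtain ⟨k, hk, hkeq⟩ := (Finset.range n).exists_mem_eq_inf' (by simp) g
    rw [hm, hkeq]
    exact hg k (Nat.lt_succ_iff.mp (Finset.mem_range.mp hk))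
  -- Step 1: sum of per-step decreases is at most h₀.
  have h1 : ∑ k ∈ Finset.range n, g k ^ 2 / (2 * L k * R ^ 2) ≤ h₀ := by
    calc ∑ k ∈ Finset.range n, g k ^ 2 / (2 * L k * R ^ 2)
        ≤ ∑ k ∈ Finset.range n, (f (x k) - f (x (k + 1))) := by
          apply Finset.sum_le_sum
          intro k hk
          have := hdec k (Nat.lt_succ_iff.mp (Finset.mem_range.mp hk))
          linarith
      _ = f (x 0) - f (x n) := Finset.sum_range_sub' (fun i => f (x i)) n
      _ ≤ h₀ := hsub
  -- Step 2: ∑ m²/L ≤ 2 h₀ R².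
  have h2 : ∑ k ∈ Finset.range n, m ^ 2 / L k ≤ 2 * h₀ * R ^ 2 := by
    have hle : ∑ k ∈ Finset.range n, m ^ 2 / L k
        ≤ ∑ k ∈ Finset.range n, g k ^ 2 / L k := by
      apply Finset.sum_le_sum
      intro k hk
      have hkt := Nat.lt_succ_iff.mp (Finset.mem_range.mp hk)
      have hmg : m ≤ g k := Finset.inf'_le _ hk
      have h2 : m ^ 2 ≤ g k ^ 2 := pow_le_pow_left₀ hm0 hmg 2
      exact div_le_div_of_nonneg_right h2 (hL k hkt).le
    have heq : ∑ k ∈ Finset.range n, g k ^ 2 / L k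
        = (2 * R ^ 2) * ∑ k ∈ Finset.range n, g k ^ 2 / (2 * L k * R ^ 2) := by
      rw [Finset.mul_sum]
      apply Finset.sum_congr rfl
      intro k hk
      have hLk := hL k (Nat.lt_succ_iff.mp (Finset.mem_range.mp hk))
      field_simp
    calc ∑ k ∈ Finset.range n, m ^ 2 / L k
        ≤ ∑ k ∈ Finset.range n, g k ^ 2 / L k := hle
      _ = (2 * R ^ 2) * ∑ k ∈ Finset.range n, g k ^ 2 / (2 * L k * R ^ 2) := heq
      _ ≤ (2 * R ^ 2) * h₀ := by
          apply mul_le_mul_of_nonneg_left h1; positivity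
      _ = 2 * h₀ * R ^ 2 := by ring
  -- Step 3: Cauchy–Schwarz gives (n*m)² ≤ (∑ m²/L)(∑ L).
  set S := ∑ k ∈ Finset.range n, L k with hS
  have hSpos : 0 < S := by
    apply Finset.sum_pos
    · intro k hk; exact hL k (Nat.lt_succ_iff.mp (Finset.mem_range.mp hk))
    · simp [hn]
  have hCS : ((n : ℝ) * m) ^ 2 ≤ (∑ k ∈ Finset.range n, m ^ 2 / L k) * S := by
    have key := Finset.sum_mul_sq_le_sq_mul_sq (Finset.range n)
      (fun k => Real.sqrt (m ^ 2 / L k)) (fun k => Real.sqrt (L k))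
    have hab : ∀ k ∈ Finset.range n,
        Real.sqrt (m ^ 2 / L k) * Real.sqrt (L k) = m := by
      intro k hk
      have hLk := hL k (Nat.lt_succ_iff.mp (Finset.mem_range.mp hk))
      rw [← Real.sqrt_mul (by positivity)]
      rw [div_mul_cancel₀ _ hLk.ne']
      exact Real.sqrt_sq hm0
    have hsq1 : ∀ k ∈ Finset.range n,
        Real.sqrt (m ^ 2 / L k) ^ 2 = m ^ 2 / L k := by
      intro k hk
      have hLk := hL k (Nat.lt_succ_iff.mp (Finset.mem_range.mp hk))
      exact Real.sq_sqrt (by positivity)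
    have hsq2 : ∀ k ∈ Finset.range n, Real.sqrt (L k) ^ 2 = L k := by
      intro k hk
      have hLk := hL k (Nat.lt_succ_iff.mp (Finset.mem_range.mp hk))
      exact Real.sq_sqrt hLk.le
    rw [Finset.sum_congr rfl hab, Finset.sum_congr rfl hsq1,
      Finset.sum_congr rfl hsq2] at key
    simpa [Finset.sum_const, Finset.card_range, mul_comm] using key
  -- conclude m² ≤ R² * (2 h₀ (S/n) / n)
  have hfin : m ^ 2 ≤ R ^ 2 * (2 * h₀ * (S / (n : ℝ)) / (n : ℝ)) := by
    have h3 : ((n : ℝ) * m) ^ 2 ≤ 2 * h₀ * R ^ 2 * S :=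
      hCS.trans (mul_le_mul_of_nonneg_right h2 hSpos.le)
    rw [mul_pow] at h3
    have heq : R ^ 2 * (2 * h₀ * (S / (n : ℝ)) / (n : ℝ)) = 2 * h₀ * R ^ 2 * S / (n:ℝ)^2 := by
      field_simp
    rw [heq, le_div_iff₀ (by positivity)]
    nlinarith
  calc m = Real.sqrt (m ^ 2) := (Real.sqrt_sq hm0).symm
    _ ≤ Real.sqrt (R ^ 2 * (2 * h₀ * (S / (n : ℝ)) / (n : ℝ))) :=
        Real.sqrt_le_sqrt hfin
    _ = R * Real.sqrt (2 * h₀ * (S / (n : ℝ)) / (n : ℝ)) := by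
        rw [Real.sqrt_mul (by positivity), Real.sqrt_sq hR.le]
    _ = R * Real.sqrt (2 * h₀ * ((∑ k ∈ Finset.range (t + 1), L k) / (↑t + 1)) / (↑t + 1)) := by
        norm_num [hn, hS]
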